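/- arXiv:1912.12088 — 2 statements merged into one kernel-verified Lean document; each statement's English description precedes it below -/
import Mathlib

section
/- Let G be a topological group, Z a finite normal subgroup of G, N a closed subgroup of G with N ∩ Z = {e}, and q : G → G/Z the quotient map. Then the restriction q|_N : N → q(N) is a topological group isomorphism onto its image (with the subspace topology from G/Z). -/
/-- If `Z` is a finite normal subgroup of a topological group `G` and `N` is a closed
subgroup with `N ∩ Z = {e}`, then the quotient map `q : G → G/Z` restricted to `N` is a
topological group isomorphism onto its image `q(N)` (with the subspace topology): it is
injective and a topological embedding. -/
theorem restriction_of_quotient_map_embedding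
    (G : Type*) [Group G] [TopologicalSpace G] [IsTopologicalGroup G]
    (Z N : Subgroup G) [Z.Normal] (hZfin : (Z : Set G).Finite)
    (hNcl : IsClosed (N : Set G)) (hNZ : N ⊓ Z = ⊥) :
    Topology.IsEmbedding (fun x : N => (QuotientGroup.mk (x : G) : G ⧸ Z)) := by
  set f : N → G ⧸ Z := fun x : N => (QuotientGroup.mk (x : G) : G ⧸ Z) with hf
  have hq : IsOpenMap ((↑) : G → G ⧸ Z) := QuotientGroup.isOpenMap_coe
  have hinj : Function.Injective f := by
    intro x y hxy
    rw [hf] at hxy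
    simp only [QuotientGroup.eq] at hxy
    have h1 : (x : G)⁻¹ * y ∈ N ⊓ Z := ⟨N.mul_mem (N.inv_mem x.2) y.2, hxy⟩
    rw [hNZ, Subgroup.mem_bot] at h1
    exact Subtype.ext (inv_mul_eq_one.mp h1)
  -- the bad set: union of cosets N z for z in Z, z ≠ 1
  set B : Set G := ⋃ z ∈ ((Z : Set G) \ {1}), (fun g => g * z) '' (N : Set G) with hB
  have hBclosed : IsClosed B := by
    apply Set.Finite.isClosed_biUnion (hZfin.diff (t := {1}))
    intro z _
    exact (Homeomorph.mulRight z).isClosedMap _ hNcl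
  set W : Set G := Bᶜ with hW
  have hWopen : IsOpen W := hBclosed.isOpen_compl
  -- N ⊆ W
  have hNW : (N : Set G) ⊆ W := by
    intro n hn hnB
    simp only [hB, Set.mem_iUnion, Set.mem_image] at hnB
    obtain ⟨z, ⟨hzZ, hz1⟩, m, hmN, hmz⟩ := hnB
    have : z ∈ N ⊓ Z := ⟨by
      have : z = m⁻¹ * n := by rw [← hmz]; group
      rw [this]; exact N.mul_mem (N.inv_mem hmN) hn, hzZ⟩
    rw [hNZ, Subgroup.mem_bot] at this
    exact hz1 this
  -- W ∩ NZ ⊆ N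
  have hWN : ∀ a : G, a ∈ W → ∀ n : G, n ∈ N → ∀ z : G, z ∈ Z → a = n * z → a ∈ N := by
    intro a haW n hnN z hzZ hazn
    by_cases hz1 : z = 1
    · rw [hazn, hz1, mul_one]; exact hnN
    · exfalso
      apply haW
      simp only [hB, Set.mem_iUnion, Set.mem_image]
      exact ⟨z, ⟨hzZ, hz1⟩, n, hnN, hazn.symm⟩
  have hcont : Continuous f := (continuous_quotient_mk').comp continuous_subtype_val
  refine ⟨⟨le_antisymm (continuous_iff_le_induced.mp hcont) ?_⟩, hinj⟩
  intro U hU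
  obtain ⟨V, hVopen, rfl⟩ := isOpen_induced_iff.mp hU
  rw [isOpen_induced_iff]
  refine ⟨(↑) '' (V ∩ W), hq _ (hVopen.inter hWopen), ?_⟩
  ext n
  simp only [Set.mem_preimage, Set.mem_image, hf]
  constructor
  · rintro ⟨a, ⟨haV, haW⟩, ha⟩
    rw [QuotientGroup.eq] at ha
    have hz : (↑n : G)⁻¹ * a ∈ Z := by
      have := Z.inv_mem ha
      simpa using this
    have haN : a ∈ N := by
      refine hWN a haW n n.2 ((↑n : G)⁻¹ * a) hz ?_
      group
    have heq : f ⟨a, haN⟩ = f n := QuotientGroup.eq.mpr ha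
    rw [← hinj heq]
    exact haV
  · intro hnV
    exact ⟨n, ⟨hnV, hNW n.2⟩, rfl⟩
end

section
/- Merson's Lemma: Let (G, γ) be a topological group, H a subgroup of G, and γ₁ ⊆ γ a coarser group topology on G such that γ₁ and γ induce the same subspace topology on H and the same quotient topology on the coset space G/H. Then γ₁ = γ. -/
open Pointwise

private lemma merson_split {G : Type*} [Group G] (t : TopologicalSpace G)
    (ht : @IsTopologicalGroup G t _) {U : Set G} (hU : U ∈ @nhds G t 1) :
    ∃ V : Set G, @IsOpen G t V ∧ @IsOpen G t V⁻¹ ∧ (1 : G) ∈ V ∧ V * V ⊆ U := by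
  letI := t
  obtain ⟨V, hV, h1, hVV⟩ := exists_open_nhds_one_mul_subset hU
  exact ⟨V, hV, hV.inv, h1, hVV⟩

private lemma merson_mem_nhds {G : Type*} [Group G] (t : TopologicalSpace G)
    {W U : Set G} (hWU : W ⊆ U) (hW : @IsOpen G t W) (h1 : (1 : G) ∈ W) :
    U ∈ @nhds G t 1 := by
  letI := t
  exact mem_nhds_iff.mpr ⟨W, hWU, hW, h1⟩

private lemma merson_mul_open {G : Type*} [Group G] (t : TopologicalSpace G)
    (ht : @IsTopologicalGroup G t _) {s : Set G} (hs : @IsOpen G t s) (u : Set G) :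
    @IsOpen G t (s * u) := by
  letI := t
  exact hs.mul_right

/-- Merson's Lemma: if `γ₁ ⊆ γ` are group topologies on `G` (Hausdorff not assumed)
inducing the same subspace topology on a subgroup `H` and the same quotient topology
on the coset space `G/H`, then `γ₁ = γ`. -/
theorem merson_lemma (G : Type*) [Group G] (γ γ₁ : TopologicalSpace G)
    (hγ : @IsTopologicalGroup G γ _) (hγ₁ : @IsTopologicalGroup G γ₁ _)
    (hcoarser : ∀ s : Set G, @IsOpen G γ₁ s → @IsOpen G γ s)
    (H : Subgroup G)
    (hsub : TopologicalSpace.induced ((↑) : H → G) γ₁ =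
      TopologicalSpace.induced ((↑) : H → G) γ)
    (hquot : TopologicalSpace.coinduced (QuotientGroup.mk : G → G ⧸ H) γ₁ =
      TopologicalSpace.coinduced (QuotientGroup.mk : G → G ⧸ H) γ) :
    γ₁ = γ := by
  refine @IsTopologicalGroup.ext G _ γ₁ γ hγ₁ hγ ?_
  have hle : γ ≤ γ₁ := fun s hs => hcoarser s hs
  refine le_antisymm ?_ (nhds_mono hle)
  intro U hU
  -- `hU : U ∈ 𝓝_γ 1`; we must show `U ∈ 𝓝_{γ₁} 1`.
  obtain ⟨V, Vop, _, V1, hVV⟩ := merson_split γ hγ hU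
  -- find a γ₁-open `O` with `O ∩ H = V ∩ H`
  have hVind : @IsOpen H (TopologicalSpace.induced ((↑) : H → G) γ)
      (((↑) : H → G) ⁻¹' V) := ⟨V, Vop, rfl⟩
  rw [← hsub] at hVind
  obtain ⟨O, Oop, hO⟩ := hVind
  have O1 : (1 : G) ∈ O := by
    have h1 : (⟨1, H.one_mem⟩ : H) ∈ ((↑) : H → G) ⁻¹' O := by
      rw [hO]; exact V1
    exact h1
  -- γ₁-open symmetric-ish `S` with `S * S ⊆ O`
  obtain ⟨S0, S0op, S0inv, S01, hS0⟩ :=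
    merson_split γ₁ hγ₁ (merson_mem_nhds γ₁ (le_refl O) Oop O1)
  set S : Set G := S0 ∩ S0⁻¹ with hSdef
  have Sop : @IsOpen G γ₁ S := @IsOpen.inter G γ₁ _ _ S0op S0inv
  have S1 : (1 : G) ∈ S := ⟨S01, by simpa using S01⟩
  -- the saturated set `(V ∩ S) * H`
  set A : Set G := V ∩ S with hAdef
  have Aop : @IsOpen G γ A := @IsOpen.inter G γ _ _ Vop (hcoarser S Sop)
  have W0op : @IsOpen G γ (A * (H : Set G)) := merson_mul_open γ hγ Aop _
  -- saturation
  have hsat : (QuotientGroup.mk : G → G ⧸ H) ⁻¹'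
      ((QuotientGroup.mk : G → G ⧸ H) '' (A * (H : Set G))) = A * (H : Set G) := by
    apply Set.Subset.antisymm
    · rintro x hx
      obtain ⟨y, hy, hxy⟩ := hx
      obtain ⟨a, ha, h, hh, rfl⟩ := hy
      have hmem : (a * h)⁻¹ * x ∈ H := (QuotientGroup.eq).mp hxy
      have : x = a * (h * ((a * h)⁻¹ * x)) := by group
      rw [this]
      exact Set.mul_mem_mul ha (H.mul_mem hh hmem)
    · exact Set.subset_preimage_image _ _
  -- `(V ∩ S) * H` is γ₁-open via the quotient hypothesis
  have W0op₁ : @IsOpen G γ₁ (A * (H : Set G)) := by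
    have hq : @IsOpen (G ⧸ H) (TopologicalSpace.coinduced (QuotientGroup.mk : G → G ⧸ H) γ)
        ((QuotientGroup.mk : G → G ⧸ H) '' (A * (H : Set G))) := by
      rw [isOpen_coinduced, hsat]; exact W0op
    rw [← hquot] at hq
    rw [isOpen_coinduced, hsat] at hq
    exact hq
  -- the γ₁-neighbourhood `S ∩ ((V ∩ S) * H)` of `1` is contained in `U`
  refine merson_mem_nhds γ₁ (U := U) ?_ (@IsOpen.inter G γ₁ _ _ Sop W0op₁)
    ⟨S1, ⟨1, ⟨V1, S1⟩, 1, H.one_mem, by simp⟩⟩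
  rintro x ⟨hxS, hxW⟩
  obtain ⟨v, hv, h, hh, rfl⟩ := hxW
  have hvV : v ∈ V := hv.1
  have hvinv : v⁻¹ ∈ S0 := by
    have := hv.2.2
    simpa using this
  have hxS0 : v * h ∈ S0 := hxS.1
  have hhO : h ∈ O := by
    have : v⁻¹ * (v * h) ∈ O := hS0 (Set.mul_mem_mul hvinv hxS0)
    simpa using this
  have hhV : h ∈ V := by
    have h1 : (⟨h, hh⟩ : H) ∈ ((↑) : H → G) ⁻¹' O := hhO
    rw [hO] at h1
    exact h1
  exact hVV (Set.mul_mem_mul hvV hhV)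
end
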